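/- Let d ∈ ℕ, ε > 0, 0 < T < ∞, and let w : [0,T] → ℝ^d be continuously differentiable with w(0) = 0. Then ∫_0^T e^{-t/ε} |w(t)|² dt ≤ 4 ε² ∫_0^T e^{-t/ε} |w'(t)|² dt. -/

import Mathlib

open MeasureTheory Set intervalIntegral

/-- For `d ∈ ℕ`, `ε > 0`, `0 < T < ∞` and a continuously differentiable
curve `w : [0,T] → ℝ^d` (with derivative `w'`) satisfying `w(0) = 0`, one has
`∫_0^T e^{-t/ε} |w(t)|² dt ≤ 4 ε² ∫_0^T e^{-t/ε} |w'(t)|² dt`. -/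
theorem wide_weighted_poincare_finite_horizon (d : ℕ) (ε T : ℝ) (hε : 0 < ε) (hT : 0 < T)
    (w w' : ℝ → EuclideanSpace ℝ (Fin d))
    (hderiv : ∀ t ∈ Set.Icc (0 : ℝ) T, HasDerivWithinAt w (w' t) (Set.Icc 0 T) t)
    (hcont : ContinuousOn w' (Set.Icc 0 T))
    (hw0 : w 0 = 0) :
    (∫ t in (0 : ℝ)..T, Real.exp (-t / ε) * ‖w t‖ ^ 2)
      ≤ 4 * ε ^ 2 * ∫ t in (0 : ℝ)..T, Real.exp (-t / ε) * ‖w' t‖ ^ 2 := by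
  have hT0 : (0 : ℝ) ≤ T := hT.le
  have hIcc : Set.uIcc (0 : ℝ) T = Set.Icc 0 T := Set.uIcc_of_le hT0
  have hwc : ContinuousOn w (Set.Icc 0 T) := fun t ht => (hderiv t ht).continuousWithinAt
  set g : ℝ → ℝ := fun t => Real.exp (-t / ε) * ‖w t‖ ^ 2 with hgdef
  set g' : ℝ → ℝ := fun t =>
    Real.exp (-t / ε) * (2 * (inner ℝ (w t) (w' t) : ℝ) - ‖w t‖ ^ 2 / ε) with hg'def
  -- derivative of g on Icc
  have hgderiv : ∀ t ∈ Set.Icc (0 : ℝ) T, HasDerivWithinAt g (g' t) (Set.Icc 0 T) t := by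
    intro t ht
    have h1 : HasDerivWithinAt (fun t : ℝ => Real.exp (-t / ε))
        (Real.exp (-t / ε) * (-1 / ε)) (Set.Icc 0 T) t :=
      (((hasDerivAt_id t).neg.div_const ε).exp).hasDerivWithinAt
    have h2 : HasDerivWithinAt (fun t => ‖w t‖ ^ 2)
        (2 * (inner ℝ (w t) (w' t) : ℝ)) (Set.Icc 0 T) t := by
      have h3 := (hderiv t ht).inner ℝ (hderiv t ht)
      have heq : (fun t => ‖w t‖ ^ 2) = fun t => (inner ℝ (w t) (w t) : ℝ) := by
        funext s; rw [real_inner_self_eq_norm_sq]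
      rw [heq]
      refine h3.congr_deriv ?_
      rw [real_inner_comm (w' t) (w t)]; ring
    have := h1.mul h2
    refine this.congr_deriv ?_
    simp only [hg'def]
    field_simp
    ring
  -- continuity of g and g' on Icc
  have hexpc : ContinuousOn (fun t : ℝ => Real.exp (-t / ε)) (Set.Icc 0 T) :=
    (Real.continuous_exp.comp ((continuous_neg.comp continuous_id).div_const ε)).continuousOn
  have hgc : ContinuousOn g (Set.Icc 0 T) := hexpc.mul ((hwc.norm).pow 2)
  have hg'c : ContinuousOn g' (Set.Icc 0 T) :=
    hexpc.mul (((continuousOn_const).mul (hwc.inner hcont)).sub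
      (((hwc.norm).pow 2).div_const ε))
  have hg'int : IntervalIntegrable g' volume 0 T := by
    apply ContinuousOn.intervalIntegrable; rwa [hIcc]
  -- FTC
  have hftc : ∫ t in (0 : ℝ)..T, g' t = g T - g 0 := by
    apply integral_eq_sub_of_hasDeriv_right_of_le hT0 hgc _ hg'int
    intro x hx
    have hmem : Set.Icc (0 : ℝ) T ∈ nhds x := Icc_mem_nhds hx.1 hx.2
    exact (((hgderiv x (Set.Ioo_subset_Icc_self hx)).hasDerivAt hmem).hasDerivWithinAt)
  have hg0 : g 0 = 0 := by simp [hgdef, hw0]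
  have hgT : 0 ≤ g T := by
    apply mul_nonneg (Real.exp_nonneg _) (sq_nonneg _)
  have hftc' : (0 : ℝ) ≤ ∫ t in (0 : ℝ)..T, g' t := by rw [hftc, hg0]; linarith
  -- pointwise inequality: g' t + (1/(2ε)) F t ≤ 2 ε G t
  set F : ℝ → ℝ := fun t => Real.exp (-t / ε) * ‖w t‖ ^ 2 with hFdef
  set G : ℝ → ℝ := fun t => Real.exp (-t / ε) * ‖w' t‖ ^ 2 with hGdef
  have hFc : ContinuousOn F (Set.Icc 0 T) := hgc
  have hGc : ContinuousOn G (Set.Icc 0 T) := hexpc.mul ((hcont.norm).pow 2)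
  have hFint : IntervalIntegrable F volume 0 T := by
    apply ContinuousOn.intervalIntegrable; rwa [hIcc]
  have hGint : IntervalIntegrable G volume 0 T := by
    apply ContinuousOn.intervalIntegrable; rwa [hIcc]
  have hpt : ∀ t ∈ Set.Icc (0 : ℝ) T,
      g' t + (1 / (2 * ε)) * F t ≤ 2 * ε * G t := by
    intro t _
    have he : (0 : ℝ) < Real.exp (-t / ε) := Real.exp_pos _
    have hcs : (inner ℝ (w t) (w' t) : ℝ) ≤ ‖w t‖ * ‖w' t‖ := real_inner_le_norm _ _
    simp only [hg'def, hFdef, hGdef]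
    have key : 2 * (inner ℝ (w t) (w' t) : ℝ) - ‖w t‖ ^ 2 / ε + (1 / (2 * ε)) * ‖w t‖ ^ 2
        ≤ 2 * ε * ‖w' t‖ ^ 2 := by
      have h4 : 0 ≤ (‖w t‖ - 2 * ε * ‖w' t‖) ^ 2 := sq_nonneg _
      have hε' : 0 < 2 * ε := by linarith
      rw [← sub_nonneg]
      have heq2 : 2 * ε * ‖w' t‖ ^ 2 -
          (2 * (inner ℝ (w t) (w' t) : ℝ) - ‖w t‖ ^ 2 / ε + 1 / (2 * ε) * ‖w t‖ ^ 2)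
          = (4 * ε ^ 2 * ‖w' t‖ ^ 2 - 4 * ε * (inner ℝ (w t) (w' t) : ℝ) + ‖w t‖ ^ 2)
            / (2 * ε) := by
        field_simp
        ring
      rw [heq2]
      apply div_nonneg _ hε'.le
      nlinarith [mul_le_mul_of_nonneg_left hcs (by linarith : (0:ℝ) ≤ 4 * ε)]
    nlinarith [mul_le_mul_of_nonneg_left key he.le]
  -- integrate the pointwise inequality
  have hmono : (∫ t in (0 : ℝ)..T, (g' t + (1 / (2 * ε)) * F t))
      ≤ ∫ t in (0 : ℝ)..T, 2 * ε * G t := by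
    apply intervalIntegral.integral_mono_on hT0 (hg'int.add (hFint.const_mul _))
      (hGint.const_mul _) hpt
  rw [intervalIntegral.integral_add hg'int (hFint.const_mul _),
    intervalIntegral.integral_const_mul, intervalIntegral.integral_const_mul] at hmono
  have hF2 : (1 / (2 * ε)) * ∫ t in (0 : ℝ)..T, F t ≤ 2 * ε * ∫ t in (0 : ℝ)..T, G t := by
    linarith
  have hεpos : (0 : ℝ) < 2 * ε := by linarith
  calc (∫ t in (0 : ℝ)..T, Real.exp (-t / ε) * ‖w t‖ ^ 2)
      = (2 * ε) * ((1 / (2 * ε)) * ∫ t in (0 : ℝ)..T, F t) := by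
        field_simp
        simp only [hFdef, neg_div]
    _ ≤ (2 * ε) * (2 * ε * ∫ t in (0 : ℝ)..T, G t) :=
        mul_le_mul_of_nonneg_left hF2 hεpos.le
    _ = 4 * ε ^ 2 * ∫ t in (0 : ℝ)..T, Real.exp (-t / ε) * ‖w' t‖ ^ 2 := by
        simp only [hGdef]; ring
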